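/- The values of the blossom at the equivalence classes of vertices are the coordinates of p in the tensor-product Bernstein basis: for all x = (x_1,…,x_n) ∈ ℝ^n, p(x) = Σ_{v̄∈V̄'} q(v̄) ∏_{k=1}^{n} 𝓑_{l_k(v̄),δ_k}((x_k − x̲_k)/(x̄_k − x̲_k)), where 𝓑_{l,δ}(y) = binom(δ,l) y^l (1−y)^{δ−l} are the Bernstein polynomials. -/

import Mathlib

open Finset

/-- The normalized elementary symmetric polynomial
`B_{l,δ}(z) = binom(δ,l)⁻¹ ∑_{1≤σ₁<⋯<σ_l≤δ} z_{σ₁}⋯z_{σ_l}`. -/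
noncomputable def normEsymm (δ l : ℕ) (z : Fin δ → ℝ) : ℝ :=
  ((δ.choose l : ℝ))⁻¹ * ∑ s ∈ Finset.powersetCard l (Finset.univ : Finset (Fin δ)),
    ∏ i ∈ s, z i

/-- The polynomial `p(x) = ∑_{l ∈ Δ} c_l x₁^{l₁}⋯x_n^{l_n}` with coefficients `c`,
where `Δ = {0,…,δ₁} × ⋯ × {0,…,δ_n}`. -/
noncomputable def polyOf {n : ℕ} {δ : Fin n → ℕ} (c : (∀ k, Fin (δ k + 1)) → ℝ)
    (x : Fin n → ℝ) : ℝ :=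
  ∑ l : ∀ k, Fin (δ k + 1), c l * ∏ k, x k ^ (l k : ℕ)

/-- The blossom `q(z) = ∑_{l ∈ Δ} c_l ∏_k B_{l_k,δ_k}(z_{k,1},…,z_{k,δ_k})` of the
polynomial with coefficients `c`. -/
noncomputable def blossomOf {n : ℕ} {δ : Fin n → ℕ} (c : (∀ k, Fin (δ k + 1)) → ℝ)
    (z : ∀ k, Fin (δ k) → ℝ) : ℝ :=
  ∑ l : ∀ k, Fin (δ k + 1), c l * ∏ k, normEsymm (δ k) (l k) (z k)

/-- A function of the blocked variables `z = (z_{k,i})` is multi-affine if it is affine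
(degree at most 1) in each single argument `z_{k,i}`. -/
def MultiAffineB {n : ℕ} (δ : Fin n → ℕ) (q : (∀ k, Fin (δ k) → ℝ) → ℝ) : Prop :=
  ∀ (k : Fin n) (i : Fin (δ k)) (z : ∀ k, Fin (δ k) → ℝ) (s t θ : ℝ),
    q (Function.update z k (Function.update (z k) i (θ * s + (1 - θ) * t)))
      = θ * q (Function.update z k (Function.update (z k) i s))
        + (1 - θ) * q (Function.update z k (Function.update (z k) i t))

/-- `z ≅ z'` : each block of `z` is a permutation of the corresponding block of `z'`. -/
def BlockRel {n : ℕ} (δ : Fin n → ℕ) (z z' : ∀ k, Fin (δ k) → ℝ) : Prop :=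
  ∀ k, ∃ π : Equiv.Perm (Fin (δ k)), ∀ i, z k i = z' k (π i)


/-- The canonical representative of the equivalence class of vertices of
`R' = ∏_k [lo k, hi k]^{δ k}` whose `k`-th block has exactly `ℓ k` coordinates
equal to `hi k` (and the rest equal to `lo k`). -/
noncomputable def vrep {n : ℕ} (δ : Fin n → ℕ) (lo hi : Fin n → ℝ)
    (ℓ : ∀ k, Fin (δ k + 1)) (k : Fin n) (i : Fin (δ k)) : ℝ :=
  if (i : ℕ) < (ℓ k : ℕ) then hi k else lo k

/-- The Bernstein polynomial `𝓑_{l,δ}(y) = binom(δ,l) y^l (1-y)^{δ-l}`. -/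
noncomputable def bern (δ l : ℕ) (y : ℝ) : ℝ :=
  (δ.choose l : ℝ) * y ^ l * (1 - y) ^ (δ - l)

/-- unnormalized elementary symmetric value at the vertex given by `T`. -/
noncomputable def eT (δ l : ℕ) (hi lo : ℝ) (T : Finset (Fin δ)) : ℝ :=
  ∑ S ∈ Finset.powersetCard l (Finset.univ : Finset (Fin δ)),
    ∏ i ∈ S, (if i ∈ T then hi else lo)

lemma eT_congr {δ l : ℕ} (hi lo : ℝ) {T T' : Finset (Fin δ)} (h : T.card = T'.card) :
    eT δ l hi lo T = eT δ l hi lo T' := by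
  classical
  have hcompl : (Tᶜ).card = (T'ᶜ).card := by
    simp [Finset.card_compl, h]
  let e₁ : {x : Fin δ // x ∈ T} ≃ {x : Fin δ // x ∈ T'} := Finset.equivOfCardEq h
  let e₂ : {x : Fin δ // ¬ x ∈ T} ≃ {x : Fin δ // ¬ x ∈ T'} :=
    ((Equiv.subtypeEquivRight (fun x => (Finset.mem_compl).symm)).trans
      (Finset.equivOfCardEq hcompl)).trans
      (Equiv.subtypeEquivRight (fun x => Finset.mem_compl))
  let π : Equiv.Perm (Fin δ) := Equiv.subtypeCongr e₁ e₂
  have hπ : ∀ i, (π i ∈ T' ↔ i ∈ T) := by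
    intro i
    by_cases hiT : i ∈ T
    · have : π i = (e₁ ⟨i, hiT⟩ : Fin δ) := by
        simp [π, Equiv.subtypeCongr, hiT]
      rw [this]
      simp [hiT, (e₁ ⟨i, hiT⟩).2]
    · have : π i = (e₂ ⟨i, hiT⟩ : Fin δ) := by
        simp [π, Equiv.subtypeCongr, hiT]
      rw [this]
      simp [hiT, (e₂ ⟨i, hiT⟩).2]
  unfold eT
  refine Finset.sum_nbij' (fun S => S.image π) (fun S => S.image π.symm) ?_ ?_ ?_ ?_ ?_
  · intro S hS
    rw [Finset.mem_powersetCard] at hS ⊢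
    exact ⟨Finset.subset_univ _, by rw [Finset.card_image_of_injective _ π.injective, hS.2]⟩
  · intro S hS
    rw [Finset.mem_powersetCard] at hS ⊢
    exact ⟨Finset.subset_univ _, by rw [Finset.card_image_of_injective _ π.symm.injective, hS.2]⟩
  · intro S _
    simp [Finset.image_image, Function.comp]
  · intro S _
    simp [Finset.image_image, Function.comp]
  · intro S _
    rw [Finset.prod_image (fun a _ b _ hab => π.injective hab)]
    exact Finset.prod_congr rfl fun i _ => by simp [hπ i]

lemma expand_one {δ : ℕ} (S : Finset (Fin δ)) (y hi lo : ℝ) :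
    ∑ T ∈ (Finset.univ : Finset (Fin δ)).powerset,
      y ^ T.card * (1 - y) ^ (δ - T.card) * ∏ i ∈ S, (if i ∈ T then hi else lo)
      = (y * hi + (1 - y) * lo) ^ S.card := by
  classical
  have key := Finset.prod_add (fun i : Fin δ => y * (if i ∈ S then hi else 1))
      (fun i : Fin δ => (1 - y) * (if i ∈ S then lo else 1)) Finset.univ
  have hL : ∏ i : Fin δ, ((y * (if i ∈ S then hi else 1)) + ((1 - y) * (if i ∈ S then lo else 1)))
      = (y * hi + (1 - y) * lo) ^ S.card := by
    have : ∀ i : Fin δ, ((y * (if i ∈ S then hi else 1)) + ((1 - y) * (if i ∈ S then lo else 1)))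
        = (if i ∈ S then (y * hi + (1 - y) * lo) else 1) := by
      intro i; by_cases hi' : i ∈ S <;> simp [hi']
    rw [Finset.prod_congr rfl (fun i _ => this i), Finset.prod_ite_mem,
      Finset.univ_inter, Finset.prod_const]
  rw [hL] at key
  rw [key]
  refine Finset.sum_congr rfl fun T hT => ?_
  rw [Finset.mem_powerset] at hT
  rw [Finset.prod_mul_distrib, Finset.prod_mul_distrib, Finset.prod_const, Finset.prod_const,
    Finset.prod_ite_mem, Finset.prod_ite_mem]
  have hcard : (Finset.univ \ T).card = δ - T.card := by
    rw [Finset.card_sdiff_of_subset hT, Finset.card_univ, Fintype.card_fin]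
  have hsplit : ∏ i ∈ S, (if i ∈ T then hi else lo)
      = (∏ _i ∈ S ∩ T, hi) * ∏ _i ∈ S \ T, lo := by
    rw [Finset.prod_ite, Finset.filter_mem_eq_inter, ← Finset.sdiff_eq_filter]
  have h1 : T ∩ S = S ∩ T := Finset.inter_comm _ _
  have h2 : (Finset.univ \ T) ∩ S = S \ T := by
    ext i; simp [Finset.mem_sdiff, Finset.mem_inter, and_comm]
  rw [hcard, hsplit, h1, h2]
  ring

lemma card_filter_lt (δ j : ℕ) (h : j ≤ δ) :
    ((Finset.univ : Finset (Fin δ)).filter (fun i : Fin δ => (i : ℕ) < j)).card = j := by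
  classical
  have h1 : ((Finset.Iio δ).filter (· < j)) = Finset.Iio j := by
    ext m; simp; omega
  calc ((Finset.univ : Finset (Fin δ)).filter (fun i : Fin δ => (i : ℕ) < j)).card
      = (((Finset.univ : Finset (Fin δ)).filter (fun i : Fin δ => (i : ℕ) < j)).map
          Fin.valEmbedding).card := (Finset.card_map _).symm
    _ = (((Finset.univ : Finset (Fin δ)).map Fin.valEmbedding).filter (· < j)).card := by
        rw [Finset.filter_map]; rfl
    _ = ((Finset.Iio δ).filter (· < j)).card := by rw [Fin.map_valEmbedding_univ]
    _ = j := by rw [h1, Nat.card_Iio]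

lemma key_single (δ l : ℕ) (hl : l ≤ δ) (y hi lo : ℝ) :
    ∑ j : Fin (δ + 1),
        normEsymm δ l (fun i => if (i : ℕ) < (j : ℕ) then hi else lo) * bern δ (j : ℕ) y
      = (y * hi + (1 - y) * lo) ^ l := by
  classical
  set x := y * hi + (1 - y) * lo with hx
  have hA1 : ∑ T ∈ (Finset.univ : Finset (Fin δ)).powerset,
      y ^ T.card * (1 - y) ^ (δ - T.card) * eT δ l hi lo T = (δ.choose l : ℝ) * x ^ l := by
    unfold eT
    simp_rw [Finset.mul_sum]
    rw [Finset.sum_comm]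
    have : ∀ S ∈ Finset.powersetCard l (Finset.univ : Finset (Fin δ)),
        (∑ T ∈ (Finset.univ : Finset (Fin δ)).powerset,
          y ^ T.card * (1 - y) ^ (δ - T.card) * ∏ i ∈ S, (if i ∈ T then hi else lo)) = x ^ l := by
      intro S hS
      rw [expand_one S y hi lo, (Finset.mem_powersetCard.mp hS).2]
    rw [Finset.sum_congr rfl this, Finset.sum_const, Finset.card_powersetCard,
      Finset.card_univ, Fintype.card_fin, nsmul_eq_mul]
  have hA2 : ∑ T ∈ (Finset.univ : Finset (Fin δ)).powerset,
      y ^ T.card * (1 - y) ^ (δ - T.card) * eT δ l hi lo T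
      = ∑ j ∈ Finset.range (δ + 1), (δ.choose j : ℝ) * (y ^ j * (1 - y) ^ (δ - j) *
          eT δ l hi lo ((Finset.univ : Finset (Fin δ)).filter (fun i => (i : ℕ) < j))) := by
    rw [Finset.sum_powerset, Finset.card_univ, Fintype.card_fin]
    refine Finset.sum_congr rfl fun j hj => ?_
    have hjδ : j ≤ δ := Nat.lt_succ_iff.mp (Finset.mem_range.mp hj)
    have : ∀ T ∈ Finset.powersetCard j (Finset.univ : Finset (Fin δ)),
        y ^ T.card * (1 - y) ^ (δ - T.card) * eT δ l hi lo T
        = y ^ j * (1 - y) ^ (δ - j) *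
            eT δ l hi lo ((Finset.univ : Finset (Fin δ)).filter (fun i => (i : ℕ) < j)) := by
      intro T hT
      have hTc : T.card = j := (Finset.mem_powersetCard.mp hT).2
      rw [hTc, eT_congr hi lo (hTc.trans (card_filter_lt δ j hjδ).symm)]
    rw [Finset.sum_congr rfl this, Finset.sum_const, Finset.card_powersetCard,
      Finset.card_univ, Fintype.card_fin, nsmul_eq_mul]
  have hET : ∀ j : ℕ, normEsymm δ l (fun i => if (i : ℕ) < j then hi else lo)
      = ((δ.choose l : ℝ))⁻¹ *
        eT δ l hi lo ((Finset.univ : Finset (Fin δ)).filter (fun i => (i : ℕ) < j)) := by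
    intro j
    unfold normEsymm eT
    congr 1
    exact Finset.sum_congr rfl fun S _ => Finset.prod_congr rfl fun i _ => by simp
  have hC : ((δ.choose l : ℝ)) ≠ 0 := Nat.cast_ne_zero.mpr (Nat.choose_pos hl).ne'
  rw [Fin.sum_univ_eq_sum_range
    (fun j => normEsymm δ l (fun i => if (i : ℕ) < j then hi else lo) * bern δ j y) (δ + 1)]
  have : ∀ j ∈ Finset.range (δ + 1),
      normEsymm δ l (fun i => if (i : ℕ) < j then hi else lo) * bern δ j y
      = ((δ.choose l : ℝ))⁻¹ * ((δ.choose j : ℝ) * (y ^ j * (1 - y) ^ (δ - j) *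
          eT δ l hi lo ((Finset.univ : Finset (Fin δ)).filter (fun i => (i : ℕ) < j)))) := by
    intro j _
    rw [hET j]
    unfold bern
    ring
  rw [Finset.sum_congr rfl this, ← Finset.mul_sum, ← hA2, hA1, inv_mul_cancel_left₀ hC]

/-- The values of the blossom at the equivalence classes of vertices of
`R' = ∏_k [lo k, hi k]^{δ k}` (represented by `vrep δ lo hi ℓ`, where `ℓ k = l_k(v̄)`)
are the coordinates of `p` in the tensor-product Bernstein basis:
`p x = ∑_{v̄} q(v̄) ∏_k 𝓑_{l_k(v̄),δ_k}((x_k − lo_k)/(hi_k − lo_k))`. -/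
theorem stmt_5 {n : ℕ} (δ : Fin n → ℕ) (hδ : ∀ k, 1 ≤ δ k)
    (lo hi : Fin n → ℝ) (hlt : ∀ k, lo k < hi k)
    (c : (∀ k, Fin (δ k + 1)) → ℝ) :
    ∀ x : Fin n → ℝ,
      polyOf c x = ∑ ℓ : ∀ k, Fin (δ k + 1),
        blossomOf c (vrep δ lo hi ℓ) *
          ∏ k, bern (δ k) (ℓ k) ((x k - lo k) / (hi k - lo k)) := by
  intro x
  classical
  unfold polyOf blossomOf
  simp_rw [Finset.sum_mul]
  rw [Finset.sum_comm]
  refine Finset.sum_congr rfl fun l _ => ?_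
  have step1 : ∀ ℓ : ∀ k, Fin (δ k + 1),
      (c l * ∏ k, normEsymm (δ k) (l k) (vrep δ lo hi ℓ k)) *
        ∏ k, bern (δ k) (ℓ k) ((x k - lo k) / (hi k - lo k))
      = c l * ∏ k, (normEsymm (δ k) (l k)
          (fun i => if (i : ℕ) < ((ℓ k : ℕ)) then hi k else lo k) *
          bern (δ k) (ℓ k) ((x k - lo k) / (hi k - lo k))) := by
    intro ℓ
    rw [mul_assoc, ← Finset.prod_mul_distrib]
    rfl
  rw [Finset.sum_congr rfl fun ℓ _ => step1 ℓ, ← Finset.mul_sum]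
  congr 1
  rw [show (Finset.univ : Finset (∀ k, Fin (δ k + 1)))
      = Fintype.piFinset (fun k => (Finset.univ : Finset (Fin (δ k + 1)))) from
      Fintype.piFinset_univ.symm,
    ← Finset.prod_univ_sum (fun _ => Finset.univ)
      (fun k (j : Fin (δ k + 1)) => normEsymm (δ k) (l k)
        (fun i => if (i : ℕ) < (j : ℕ) then hi k else lo k) *
        bern (δ k) (j : ℕ) ((x k - lo k) / (hi k - lo k)))]
  refine Finset.prod_congr rfl fun k _ => ?_
  have hne : hi k - lo k ≠ 0 := sub_ne_zero.mpr (hlt k).ne'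
  set y := (x k - lo k) / (hi k - lo k) with hy
  have hx : y * hi k + (1 - y) * lo k = x k := by
    rw [hy]
    field_simp
    ring
  rw [key_single (δ k) (l k) (Fin.is_le (l k)) y (hi k) (lo k), hx]
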